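/- Let N ≥ 1 be an integer, M > N an integer, and 0 < P_s < P_n reals. Set ζ = (P_n − P_s)/(P_s P_n). Let X ~ Gamma(N, P_s) and Y ~ Gamma(M−N, P_n) be independent. Then for every real c > 0, setting τ_1 = P_s^{−1} + c and τ_2 = P_n^{−1} + c, E[ e^{-c(X+Y)} ] = Σ_{n=0}^{M-N-1} [ C(N+n−1, n) · P_n^{2N−M} / ( (−ζ)^n (P_n − P_s)^N ) ] · [ 1/τ_2^{M−N−n} − Σ_{m=0}^{N+n-1} C(M−N−n−1+m, m) ζ^m / τ_1^{M−N−n+m} ]. -/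

import Mathlib

open MeasureTheory ProbabilityTheory Real Finset
open scoped NNReal ENNReal

lemma gamma_laplace {a r c : ℝ} (ha : 0 < a) (hr : 0 < r) (hc : 0 < c) :
    ∫ x, Real.exp (-(c * x)) ∂(gammaMeasure a r) = (r / (r + c)) ^ a := by
  have hrc : 0 < r + c := by linarith
  have hpdf : ∀ x : ℝ, gammaPDF a r x = ((Real.toNNReal (gammaPDFReal a r x) : ℝ≥0) : ℝ≥0∞) :=
    fun x => rfl
  have hfun : gammaPDF a r = fun x => ((Real.toNNReal (gammaPDFReal a r x) : ℝ≥0) : ℝ≥0∞) :=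
    funext hpdf
  rw [gammaMeasure, hfun]
  rw [integral_withDensity_eq_integral_smul ((measurable_gammaPDFReal a r).real_toNNReal) _]
  have h1 : ∀ x : ℝ, (Real.toNNReal (gammaPDFReal a r x)) • Real.exp (-(c * x))
      = gammaPDFReal a r x * Real.exp (-(c * x)) := by
    intro x
    rw [NNReal.smul_def, Real.coe_toNNReal _ (gammaPDFReal_nonneg ha hr x)]
    rfl
  simp_rw [h1]
  rw [← setIntegral_eq_integral_of_forall_compl_eq_zero
      (s := Set.Ici (0:ℝ)) (fun x hx => by
        rw [gammaPDFReal, if_neg (by exact hx), zero_mul])]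
  rw [integral_Ici_eq_integral_Ioi]
  rw [setIntegral_congr_fun measurableSet_Ioi
      (g := fun x : ℝ => r ^ a / Real.Gamma a * (x ^ (a - 1) * Real.exp (-((r + c) * x))))
      (fun x (hx : 0 < x) => by
        show _ = r ^ a / Real.Gamma a * (x ^ (a - 1) * Real.exp (-((r + c) * x)))
        rw [gammaPDFReal, if_pos hx.le, mul_assoc, ← Real.exp_add]
        ring_nf)]
  rw [integral_const_mul, integral_rpow_mul_exp_neg_mul_Ioi ha hrc]
  rw [div_rpow hr.le hrc.le]
  rw [one_div, Real.inv_rpow hrc.le]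
  have h2 : Real.Gamma a ≠ 0 := (Real.Gamma_pos_of_pos ha).ne'
  have h3 : (r + c) ^ a ≠ 0 := (Real.rpow_pos_of_pos hrc a).ne'
  field_simp


/-- Generalized alternating Vandermonde-type identity. -/
private lemma Gp : ∀ p ν e T : ℕ, T = ν + e + 1 + p →
    ∑ n ∈ range (p+1), ((-1:ℤ)^n * ((ν+n).choose n : ℤ) * (T.choose (p-n) : ℤ))
      = ((e+p).choose p : ℤ) := by
  intro p
  induction p with
  | zero => intro ν e T hT; simp
  | succ p ihp =>
    intro ν
    induction ν with
    | zero =>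
      intro e T hT
      rw [Finset.sum_range_succ']
      have h1 : ∀ i ∈ range (p+1),
          (-1:ℤ)^(i+1) * (((0:ℕ)+(i+1)).choose (i+1) : ℤ) * (T.choose (p+1-(i+1)) : ℤ)
          = -((-1:ℤ)^i * (((0:ℕ)+i).choose i : ℤ) * (T.choose (p-i) : ℤ)) := by
        intro i _
        have hs : p+1-(i+1) = p-i := by omega
        rw [hs]
        simp [Nat.choose_self, pow_succ]
      rw [Finset.sum_congr rfl h1, Finset.sum_neg_distrib, ihp 0 (e+1) T (by omega)]
      have hT2 : T = (e+p+1)+1 := by omega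
      have hp2 := Nat.choose_succ_succ' (e+p+1) p
      have hx : e+1+p = e+p+1 := by omega
      have hy : e+(p+1) = e+p+1 := by omega
      rw [hT2, hx, hy]
      simp only [Nat.sub_zero, pow_zero, one_mul, Nat.zero_add, Nat.choose_zero_right,
        Nat.cast_one, hp2]
      push_cast
      ring
    | succ ν ihν =>
      intro e T hT
      rw [Finset.sum_range_succ']
      have h1 : ∀ i ∈ range (p+1),
          (-1:ℤ)^(i+1) * ((ν+1+(i+1)).choose (i+1) : ℤ) * (T.choose (p+1-(i+1)) : ℤ)
          = -((-1:ℤ)^i * ((ν+1+i).choose i : ℤ) * (T.choose (p-i) : ℤ))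
            + -((-1:ℤ)^i * ((ν+1+i).choose (i+1) : ℤ) * (T.choose (p-i) : ℤ)) := by
        intro i _
        have hs : p+1-(i+1) = p-i := by omega
        have hp' : (ν+1+(i+1)).choose (i+1) = (ν+1+i).choose i + (ν+1+i).choose (i+1) := by
          have e1 : ν+1+(i+1) = (ν+1+i)+1 := by omega
          rw [e1, Nat.choose_succ_succ']
        rw [hs, hp']
        push_cast
        ring
      rw [Finset.sum_congr rfl h1, Finset.sum_add_distrib, Finset.sum_neg_distrib,
        Finset.sum_neg_distrib, ihp (ν+1) (e+1) T (by omega)]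
      -- remaining: -C(e+1+p,p) + -(∑ (-1)^i C(ν+1+i, i+1) C(T, p-i)) + C(ν+1+0,0)*C(T,p+1-0) = C(e+(p+1), p+1)
      have hQ := ihν (e+1) T (by omega)
      rw [Finset.sum_range_succ'] at hQ
      have h2 : ∀ i ∈ range (p+1),
          (-1:ℤ)^(i+1) * ((ν+(i+1)).choose (i+1) : ℤ) * (T.choose (p+1-(i+1)) : ℤ)
          = -((-1:ℤ)^i * ((ν+1+i).choose (i+1) : ℤ) * (T.choose (p-i) : ℤ)) := by
        intro i _
        have hs : p+1-(i+1) = p-i := by omega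
        have e1 : ν+(i+1) = ν+1+i := by omega
        rw [hs, e1]
        ring
      rw [Finset.sum_congr rfl h2, Finset.sum_neg_distrib] at hQ
      -- hQ : -(∑ ...) + C(ν,0)*C(T,p+1) = C(e+1+(p+1), p+1)
      have hpas := Nat.choose_succ_succ' (e+p+1) p
      have hx1 : e+1+p = e+p+1 := by omega
      have hx2 : e+(p+1) = e+p+1 := by omega
      have hx3 : e+1+(p+1) = (e+p+1)+1 := by omega
      rw [hx3] at hQ
      rw [hpas] at hQ
      rw [hx1, hx2]
      push_cast at hQ
      simp only [Nat.choose_zero_right, Nat.cast_one, one_mul, pow_zero, Nat.sub_zero,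
        Nat.cast_add] at hQ ⊢
      linarith [hQ]

/-- The collapse case: the alternating sum vanishes for `p ≠ 0`. -/
private lemma Hz (ν p : ℕ) (hp : p ≠ 0) :
    ∑ n ∈ range (p+1), ((-1:ℤ)^n * ((ν+n).choose n : ℤ) * ((ν+p).choose (p-n) : ℤ)) = 0 := by
  cases ν with
  | zero =>
    have h1 : ∀ n ∈ range (p+1),
        (-1:ℤ)^n * (((0:ℕ)+n).choose n : ℤ) * (((0:ℕ)+p).choose (p-n) : ℤ)
        = (-1:ℤ)^n * (p.choose n : ℤ) := by
      intro n hn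
      have hn' : n ≤ p := by simpa using Nat.lt_succ_iff.mp (Finset.mem_range.mp hn)
      have hsym : p.choose (p-n) = p.choose n := Nat.choose_symm hn'
      simp [hsym, Nat.choose_self]
    rw [Finset.sum_congr rfl h1]
    exact Int.alternating_sum_range_choose_of_ne hp
  | succ w =>
    obtain ⟨q, rfl⟩ : ∃ q, p = q+1 := ⟨p-1, by omega⟩
    rw [Finset.sum_range_succ']
    have h1 : ∀ i ∈ range (q+1),
        (-1:ℤ)^(i+1) * ((w+1+(i+1)).choose (i+1) : ℤ) * ((w+1+(q+1)).choose (q+1-(i+1)) : ℤ)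
        = -((-1:ℤ)^i * ((w+1+i).choose i : ℤ) * ((w+1+(q+1)).choose (q-i) : ℤ))
          + -((-1:ℤ)^i * ((w+1+i).choose (i+1) : ℤ) * ((w+1+(q+1)).choose (q-i) : ℤ)) := by
      intro i _
      have hs : q+1-(i+1) = q-i := by omega
      have hp' : (w+1+(i+1)).choose (i+1) = (w+1+i).choose i + (w+1+i).choose (i+1) := by
        have e1 : w+1+(i+1) = (w+1+i)+1 := by omega
        rw [e1, Nat.choose_succ_succ']
      rw [hs, hp']
      push_cast
      ring
    rw [Finset.sum_congr rfl h1, Finset.sum_add_distrib, Finset.sum_neg_distrib,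
      Finset.sum_neg_distrib, Gp q (w+1) 0 (w+1+(q+1)) (by omega)]
    have hQ := Gp (q+1) w 0 (w+1+(q+1)) (by omega)
    rw [Finset.sum_range_succ'] at hQ
    have h2 : ∀ i ∈ range (q+1),
        (-1:ℤ)^(i+1) * ((w+(i+1)).choose (i+1) : ℤ) * ((w+1+(q+1)).choose (q+1-(i+1)) : ℤ)
        = -((-1:ℤ)^i * ((w+1+i).choose (i+1) : ℤ) * ((w+1+(q+1)).choose (q-i) : ℤ)) := by
      intro i _
      have hs : q+1-(i+1) = q-i := by omega
      have e1 : w+(i+1) = w+1+i := by omega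
      rw [hs, e1]
      ring
    rw [Finset.sum_congr rfl h2, Finset.sum_neg_distrib] at hQ
    simp only [Nat.choose_zero_right, Nat.choose_self, Nat.cast_one, one_mul, pow_zero,
      Nat.sub_zero, Nat.zero_add, zero_add] at hQ ⊢
    linarith [hQ]

/-- Abel-type summation with binomial coefficients. -/
private lemma abel_sum (l : ℕ) (f : ℕ → ℝ) : ∀ n : ℕ,
    ∑ i ∈ range n, ((l+1+i).choose i : ℝ) * (f i - f (i+1))
      = (∑ i ∈ range n, ((l+i).choose i : ℝ) * f i) - ((l+n).choose (l+1) : ℝ) * f n := by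
  have key : ∀ n : ℕ, (l+1+n).choose n = (l+n).choose n + (l+n).choose (l+1) := by
    intro n
    have h := Nat.choose_symm (n := l+1+n) (k := n) (by omega)
    have hs : l+1+n - n = l+1 := by omega
    rw [hs] at h
    rw [← h]
    have e1 : l+1+n = (l+n)+1 := by omega
    rw [e1, Nat.choose_succ_succ']
    have h2 := Nat.choose_symm (n := l+n) (k := n) (by omega)
    have hs2 : l+n-n = l := by omega
    rw [hs2] at h2
    rw [h2]
  intro n
  induction n with
  | zero => simp [Nat.choose_eq_zero_of_lt (by omega : l < l+1)]
  | succ n ih =>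
    rw [Finset.sum_range_succ, ih, Finset.sum_range_succ]
    have h2 : (l+(n+1)).choose (l+1) = (l+1+n).choose (l+1) := by
      have : l+(n+1) = l+1+n := by omega
      rw [this]
    have h3 : (l+1+n).choose (l+1) = (l+1+n).choose n := by
      have h := Nat.choose_symm (n := l+1+n) (k := n) (by omega)
      have hs : l+1+n - n = l+1 := by omega
      rw [hs] at h
      rw [h]
    rw [h2, h3, key n]
    push_cast
    ring

/-- Finite negative-binomial expansion of `1/b^(j+1)` around `1/a` with exact remainder. -/
private lemma lemG (a b ζ : ℝ) (ha : a ≠ 0) (hb : b ≠ 0) (hzeq : ζ = a - b) (j : ℕ) :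
    ∀ l : ℕ, 1/b^(j+1) = (∑ m ∈ range (l+1), ((j+m).choose m : ℝ) * ζ^m / a^(j+1+m))
      + ζ^(l+1) * ∑ i ∈ range (j+1), ((l+i).choose i : ℝ) / (a^(l+1+i) * b^(j+1-i)) := by
  have hstep : ∀ l i : ℕ, i ≤ j →
      1/(a^(l+i) * b^(j+1-i)) - 1/(a^(l+i+1) * b^(j-i)) = ζ / (a^(l+i+1) * b^(j+1-i)) := by
    intro l i hij
    have h1 : j+1-i = (j-i)+1 := by omega
    rw [h1, hzeq]
    field_simp
    ring
  intro l
  induction l with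
  | zero =>
    have tele := Finset.sum_range_sub' (f := fun i => 1/(a^i * b^(j+1-i))) (n := j+1)
    have h1 : ∀ i ∈ range (j+1),
        1/(a^i * b^(j+1-i)) - 1/(a^(i+1) * b^(j+1-(i+1)))
        = ζ * ((((0:ℕ)+i).choose i : ℝ) / (a^((0:ℕ)+1+i) * b^(j+1-i))) := by
      intro i hi
      have hij : i ≤ j := by simpa using Nat.lt_succ_iff.mp (Finset.mem_range.mp hi)
      have h2 : j+1-(i+1) = j-i := by omega
      have hh := hstep 0 i hij
      rw [h2]
      simp only [Nat.zero_add, zero_add, Nat.choose_self, Nat.cast_one] at hh ⊢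
      rw [hh]
      ring
    rw [Finset.sum_congr rfl h1, ← Finset.mul_sum] at tele
    simp only [pow_zero, one_mul, mul_one, Nat.sub_zero, Nat.sub_self] at tele
    rw [Finset.sum_range_one]
    simp only [Nat.add_zero, Nat.choose_zero_right, Nat.cast_one, pow_zero, one_mul,
      mul_one, zero_add, pow_one, Nat.zero_add, Nat.choose_self] at tele ⊢
    linarith [tele]
  | succ l ih =>
    rw [ih, Finset.sum_range_succ
      (f := fun m => ((j+m).choose m : ℝ) * ζ^m / a^(j+1+m)) (n := l+1)]
    -- suffices: ζ^(l+1) * S_l = C(j+(l+1), l+1) ζ^(l+1)/a^(j+1+(l+1)) + ζ^(l+2) * S'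
    have habel := abel_sum l (fun i => 1/(a^(l+1+i) * b^(j+1-i))) (j+1)
    have h1 : ∀ i ∈ range (j+1),
        ((l+1+i).choose i : ℝ) * (1/(a^(l+1+i) * b^(j+1-i)) - 1/(a^(l+1+(i+1)) * b^(j+1-(i+1))))
        = ζ * (((l+1+i).choose i : ℝ) / (a^(l+1+1+i) * b^(j+1-i))) := by
      intro i hi
      have hij : i ≤ j := by simpa using Nat.lt_succ_iff.mp (Finset.mem_range.mp hi)
      have h2 : j+1-(i+1) = j-i := by omega
      have h3 : l+1+(i+1) = (l+1+i)+1 := by omega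
      have h4 : l+1+1+i = (l+1+i)+1 := by omega
      have hh := hstep (l+1) i hij
      rw [h2, h3, h4, hh]
      ring
    rw [Finset.sum_congr rfl h1, ← Finset.mul_sum] at habel
    -- habel : ζ * ∑ C(l+1+i,i)/(a^(l+2+i) b^(j+1-i)) = ∑ C(l+i,i)/(a^(l+1+i) b^(j+1-i)) - C(l+(j+1),l+1)/(a^(l+1+(j+1)) b^(j+1-(j+1)))
    have hc : (l+(j+1)).choose (l+1) = (j+(l+1)).choose (l+1) := by
      have : l+(j+1) = j+(l+1) := by omega
      rw [this]
    simp only [Nat.sub_self, pow_zero, mul_one, hc] at habel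
    have hsum1 : ∀ i ∈ range (j+1), ((l+i).choose i : ℝ) * (1/(a^(l+1+i) * b^(j+1-i)))
        = ((l+i).choose i : ℝ) / (a^(l+1+i) * b^(j+1-i)) := by
      intro i _; ring
    rw [Finset.sum_congr rfl hsum1] at habel
    -- now assemble
    have expand : ζ^(l+1+1) * ∑ i ∈ range (j+1), ((l+1+i).choose i : ℝ) / (a^(l+1+1+i) * b^(j+1-i))
        = ζ^(l+1) * ((∑ i ∈ range (j+1), ((l+i).choose i : ℝ) / (a^(l+1+i) * b^(j+1-i)))
            - ((j+(l+1)).choose (l+1) : ℝ) * (1/a^(l+1+(j+1)))) := by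
      rw [← habel]
      ring
    have hpow : a^(j+1+(l+1)) = a^(l+1+(j+1)) := by
      have : j+1+(l+1) = l+1+(j+1) := by omega
      rw [this]
    rw [expand, hpow]
    ring

private lemma sum_triangle (f : ℕ → ℕ → ℝ) : ∀ K : ℕ,
    ∑ n ∈ range K, ∑ i ∈ range (K-n), f n (n+i)
      = ∑ p ∈ range K, ∑ n ∈ range (p+1), f n p := by
  intro K
  induction K with
  | zero => simp
  | succ K ih =>
    have hsplit : ∀ n ∈ range (K+1), ∑ i ∈ range (K+1-n), f n (n+i)
        = (∑ i ∈ range (K-n), f n (n+i)) + f n K := by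
      intro n hn
      have hn' : n ≤ K := by simpa using Nat.lt_succ_iff.mp (Finset.mem_range.mp hn)
      have h1 : K+1-n = (K-n)+1 := by omega
      have h2 : n+(K-n) = K := by omega
      rw [h1, Finset.sum_range_succ, h2]
    rw [Finset.sum_congr rfl hsplit, Finset.sum_add_distrib,
      Finset.sum_range_succ (f := fun n => ∑ i ∈ range (K-n), f n (n+i)) (n := K)]
    simp only [Nat.sub_self, Finset.range_zero, Finset.sum_empty, add_zero]
    rw [ih, Finset.sum_range_succ (f := fun p => ∑ n ∈ range (p+1), f n p) (n := K)]

private lemma main_alg (a b ζ : ℝ) (ha : a ≠ 0) (hb : b ≠ 0) (hz : ζ ≠ 0)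
    (hzeq : ζ = a - b) (ν κ : ℕ) :
    1/(a^(ν+1) * b^(κ+1)) = ∑ n ∈ range (κ+1), ((ν+n).choose n : ℝ) * (-1)^n * (1/ζ)^(ν+1+n)
      * (1/b^(κ+1-n) - ∑ m ∈ range (ν+1+n), ((κ-n+m).choose m : ℝ) * ζ^m / a^(κ+1-n+m)) := by
  have hterm : ∀ n ∈ range (κ+1),
      ((ν+n).choose n : ℝ) * (-1)^n * (1/ζ)^(ν+1+n)
        * (1/b^(κ+1-n) - ∑ m ∈ range (ν+1+n), ((κ-n+m).choose m : ℝ) * ζ^m / a^(κ+1-n+m))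
      = ∑ i ∈ range (κ+1-n), ((ν+n).choose n : ℝ) * (-1)^n
          * (((ν+n+i).choose i : ℝ) / (a^(ν+1+n+i) * b^(κ+1-n-i))) := by
    intro n hn
    have hn' : n ≤ κ := by simpa using Nat.lt_succ_iff.mp (Finset.mem_range.mp hn)
    have hG := lemG a b ζ ha hb hzeq (κ-n) (ν+n)
    have e1 : κ+1-n = (κ-n)+1 := by omega
    have e2 : ν+1+n = (ν+n)+1 := by omega
    have htr : ∑ m ∈ range (ν+1+n), ((κ-n+m).choose m : ℝ) * ζ^m / a^(κ+1-n+m)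
        = ∑ m ∈ range ((ν+n)+1), ((κ-n+m).choose m : ℝ) * ζ^m / a^((κ-n)+1+m) := by
      rw [e2]
      refine Finset.sum_congr rfl (fun m _ => ?_)
      have : κ+1-n+m = (κ-n)+1+m := by omega
      rw [this]
    rw [htr, e1, hG]
    have hcan : (1/ζ)^(ν+1+n) * ζ^((ν+n)+1) = 1 := by
      rw [e2, one_div, inv_pow, inv_mul_cancel₀ (pow_ne_zero _ hz)]
    rw [add_sub_cancel_left]
    simp only [Finset.mul_sum]
    refine Finset.sum_congr rfl (fun i _ => ?_)
    have e3 : (κ-n)+1-i = κ+1-n-i := by omega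
    have e4 : (ν+n)+1+i = ν+1+n+i := by omega
    rw [e3, e4]
    calc ((ν+n).choose n : ℝ) * (-1)^n * (1/ζ)^(ν+1+n)
          * (ζ^((ν+n)+1) * (((ν+n+i).choose i : ℝ) / (a^(ν+1+n+i) * b^(κ+1-n-i))))
        = ((1/ζ)^(ν+1+n) * ζ^((ν+n)+1)) * (((ν+n).choose n : ℝ) * (-1)^n
            * (((ν+n+i).choose i : ℝ) / (a^(ν+1+n+i) * b^(κ+1-n-i)))) := by ring
      _ = ((ν+n).choose n : ℝ) * (-1)^n
            * (((ν+n+i).choose i : ℝ) / (a^(ν+1+n+i) * b^(κ+1-n-i))) := by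
          rw [hcan, one_mul]
  rw [Finset.sum_congr rfl hterm]
  have htri := sum_triangle (fun n p => ((ν+n).choose n : ℝ) * (-1)^n
      * (((ν+p).choose (p-n) : ℝ) / (a^(ν+1+p) * b^(κ+1-p)))) (κ+1)
  have hform : ∀ n ∈ range (κ+1),
      ∑ i ∈ range (κ+1-n), ((ν+n).choose n : ℝ) * (-1)^n
          * (((ν+n+i).choose i : ℝ) / (a^(ν+1+n+i) * b^(κ+1-n-i)))
      = ∑ i ∈ range ((κ+1)-n), (fun n p => ((ν+n).choose n : ℝ) * (-1)^n
          * (((ν+p).choose (p-n) : ℝ) / (a^(ν+1+p) * b^(κ+1-p)))) n (n+i) := by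
    intro n hn
    refine Finset.sum_congr rfl (fun i _ => ?_)
    show _ = ((ν+n).choose n : ℝ) * (-1)^n
        * (((ν+(n+i)).choose ((n+i)-n) : ℝ) / (a^(ν+1+(n+i)) * b^(κ+1-(n+i))))
    rw [show ν+(n+i) = ν+n+i from by omega, show (n+i)-n = i from by omega,
      show ν+1+(n+i) = ν+1+n+i from by omega, show κ+1-(n+i) = κ+1-n-i from by omega]
  rw [Finset.sum_congr rfl hform, htri]
  have hcollapse : ∀ p ∈ range (κ+1),
      ∑ n ∈ range (p+1), ((ν+n).choose n : ℝ) * (-1)^n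
        * (((ν+p).choose (p-n) : ℝ) / (a^(ν+1+p) * b^(κ+1-p)))
      = ((∑ n ∈ range (p+1), ((-1:ℤ)^n * ((ν+n).choose n : ℤ) * ((ν+p).choose (p-n) : ℤ)) : ℤ) : ℝ)
          * (1 / (a^(ν+1+p) * b^(κ+1-p))) := by
    intro p _
    push_cast
    rw [Finset.sum_mul]
    refine Finset.sum_congr rfl (fun n _ => ?_)
    ring
  rw [Finset.sum_congr rfl hcollapse]
  rw [Finset.sum_eq_single 0]
  · simp
  · intro p _ hp
    rw [Hz ν p hp]
    simp
  · intro h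
    simp at h


/-- Lemma 2 of the paper, case `0 < φ < N/M` (i.e. `P_s < P_n`): Laplace transform
`E[e^(-c(X+Y))]` of the sum of the independent signal gain `X ~ Gamma(N, P_s)` and
AN gain `Y ~ Gamma(M-N, P_n)` (shape/scale convention, i.e. rates `P_s⁻¹`, `P_n⁻¹`). -/
theorem laplace_sum_gamma_Ps_lt_Pn
    {Ω : Type*} [MeasurableSpace Ω] (P : Measure Ω) [IsProbabilityMeasure P]
    (N M : ℕ) (hN : 1 ≤ N) (hM : N < M)
    (Ps Pn : ℝ) (hPs : 0 < Ps) (hPsPn : Ps < Pn)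
    (ζ : ℝ) (hζ : ζ = (Pn - Ps) / (Ps * Pn))
    (X Y : Ω → ℝ) (hX : Measurable X) (hY : Measurable Y)
    (hIndep : IndepFun X Y P)
    (hXlaw : P.map X = gammaMeasure (N : ℝ) Ps⁻¹)
    (hYlaw : P.map Y = gammaMeasure ((M : ℝ) - N) Pn⁻¹)
    (c : ℝ) (hc : 0 < c)
    (τ₁ τ₂ : ℝ) (hτ₁ : τ₁ = Ps⁻¹ + c) (hτ₂ : τ₂ = Pn⁻¹ + c) :
    ∫ ω, Real.exp (-(c * (X ω + Y ω))) ∂P =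
      ∑ n ∈ Finset.range (M - N),
        (((N + n - 1).choose n : ℝ) * Pn ^ (2 * (N : ℤ) - M) /
            ((-ζ) ^ n * (Pn - Ps) ^ N)) *
          (1 / τ₂ ^ (M - N - n) -
            ∑ m ∈ Finset.range (N + n),
              ((M - N - n - 1 + m).choose m : ℝ) * ζ ^ m / τ₁ ^ (M - N - n + m)) := by
  obtain ⟨ν, rfl⟩ : ∃ ν, N = ν + 1 := ⟨N - 1, by omega⟩
  obtain ⟨κ, hK⟩ : ∃ κ, M - (ν + 1) = κ + 1 := ⟨M - (ν + 1) - 1, by omega⟩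
  have hM2 : M = (ν + 1) + (κ + 1) := by omega
  have hPn : 0 < Pn := hPs.trans hPsPn
  have hτ₁pos : 0 < τ₁ := by rw [hτ₁]; positivity
  have hτ₂pos : 0 < τ₂ := by rw [hτ₂]; positivity
  have hζ' : ζ = τ₁ - τ₂ := by
    rw [hζ, hτ₁, hτ₂]
    field_simp
    ring
  have hζpos : 0 < ζ := by
    rw [hζ]
    apply div_pos (by linarith) (by positivity)
  have hmeas : Measurable fun x : ℝ => Real.exp (-(c * x)) :=
    Real.measurable_exp.comp (measurable_const.mul measurable_id).neg
  -- Step 1: independence splits the expectation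
  have hsplit : (∫ ω, Real.exp (-(c * (X ω + Y ω))) ∂P)
      = (∫ ω, Real.exp (-(c * X ω)) ∂P) * (∫ ω, Real.exp (-(c * Y ω)) ∂P) := by
    have hfun : ∀ ω, Real.exp (-(c * (X ω + Y ω)))
        = Real.exp (-(c * X ω)) * Real.exp (-(c * Y ω)) := by
      intro ω
      rw [← Real.exp_add]
      ring_nf
    simp_rw [hfun]
    exact (hIndep.comp hmeas hmeas).integral_fun_mul_eq_mul_integral
      ((hmeas.comp hX).aestronglyMeasurable) ((hmeas.comp hY).aestronglyMeasurable)
  -- Step 2: each factor via the gamma Laplace transform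
  have hXfact : ∫ ω, Real.exp (-(c * X ω)) ∂P = (Ps⁻¹ / τ₁) ^ (ν + 1) := by
    rw [← integral_map hX.aemeasurable hmeas.aestronglyMeasurable, hXlaw,
      gamma_laplace (by positivity) (inv_pos.mpr hPs) hc, hτ₁, Real.rpow_natCast]
  have hYexp : ((M : ℝ) - ((ν + 1 : ℕ) : ℝ)) = ((κ + 1 : ℕ) : ℝ) := by
    rw [hM2]
    push_cast
    ring
  have hYfact : ∫ ω, Real.exp (-(c * Y ω)) ∂P = (Pn⁻¹ / τ₂) ^ (κ + 1) := by
    rw [← integral_map hY.aemeasurable hmeas.aestronglyMeasurable, hYlaw, hYexp,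
      gamma_laplace (by positivity) (inv_pos.mpr hPn) hc, hτ₂, Real.rpow_natCast]
  rw [hsplit, hXfact, hYfact, hK]
  -- Step 3: the algebraic identity
  have key := main_alg τ₁ τ₂ ζ hτ₁pos.ne' hτ₂pos.ne' hζpos.ne' hζ' ν κ
  have lhs_eq : (Ps⁻¹ / τ₁) ^ (ν + 1) * (Pn⁻¹ / τ₂) ^ (κ + 1)
      = Ps⁻¹ ^ (ν + 1) * Pn⁻¹ ^ (κ + 1) * (1 / (τ₁ ^ (ν + 1) * τ₂ ^ (κ + 1))) := by
    rw [div_pow, div_pow]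
    field_simp
  rw [lhs_eq, key, Finset.mul_sum]
  refine Finset.sum_congr rfl (fun n hn => ?_)
  have hbr : ∑ m ∈ Finset.range (ν + 1 + n), ((κ + 1 - n - 1 + m).choose m : ℝ)
        * ζ ^ m / τ₁ ^ (κ + 1 - n + m)
      = ∑ m ∈ Finset.range (ν + 1 + n), ((κ - n + m).choose m : ℝ)
        * ζ ^ m / τ₁ ^ (κ + 1 - n + m) :=
    Finset.sum_congr rfl (fun m _ => by rw [show κ + 1 - n - 1 + m = κ - n + m from by omega])
  rw [hbr, show ν + 1 + n - 1 = ν + n from by omega]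
  have hPnPs : Pn - Ps = ζ * (Ps * Pn) := by
    rw [hζ]
    field_simp
  have hzp : Pn ^ (2 * ((ν + 1 : ℕ) : ℤ) - (M : ℤ))
      = Pn ^ (2 * (ν + 1)) / Pn ^ ((ν + 1) + (κ + 1)) := by
    rw [show 2 * ((ν + 1 : ℕ) : ℤ) - (M : ℤ)
        = ((2 * (ν + 1) : ℕ) : ℤ) - (((ν + 1) + (κ + 1) : ℕ) : ℤ) from by
          rw [hM2]; push_cast; ring,
      zpow_sub₀ hPn.ne', zpow_natCast, zpow_natCast]
  rw [hzp, hPnPs]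
  have hζne : ζ ≠ 0 := hζpos.ne'
  have hPsne : Ps ≠ 0 := hPs.ne'
  have hPnne : Pn ≠ 0 := hPn.ne'
  rw [show ((-ζ) ^ n : ℝ) = (-1) ^ n * ζ ^ n from by rw [neg_pow]]
  rw [show ((ζ * (Ps * Pn)) ^ (ν + 1) : ℝ) = ζ ^ (ν + 1) * (Ps ^ (ν + 1) * Pn ^ (ν + 1))
    from by rw [mul_pow, mul_pow]]
  rcases Nat.even_or_odd n with he | ho
  · rw [he.neg_one_pow]
    simp only [one_div_pow, inv_pow]
    field_simp
    ring
  · rw [ho.neg_one_pow]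
    simp only [one_div_pow, inv_pow]
    field_simp
    ring
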